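/- Scalar Chernoff estimate: there exists a constant M > 0 such that for all n ≥ 1 and all λ ∈ [0,1], |λ^n - e^{n(λ - 1)}| ≤ M/n. -/
import Mathlib

lemma aux_pow_sub_pow_le {a b : ℝ} (hb : 0 ≤ b) (hba : b ≤ a) (ha : a ≤ 1) (n : ℕ) :
    a ^ n - b ^ n ≤ n * a ^ (n - 1) * (a - b) := by
  rw [← geom_sum₂_mul a b n]
  have ha0 : 0 ≤ a := hb.trans hba
  have : (∑ i ∈ Finset.range n, a ^ i * b ^ (n - 1 - i)) ≤ n * a ^ (n - 1) := by
    calc (∑ i ∈ Finset.range n, a ^ i * b ^ (n - 1 - i))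
        ≤ ∑ i ∈ Finset.range n, a ^ (n - 1) := by
          apply Finset.sum_le_sum
          intro i hi
          calc a ^ i * b ^ (n - 1 - i) ≤ a ^ i * a ^ (n - 1 - i) := by
                apply mul_le_mul_of_nonneg_left (pow_le_pow_left₀ hb hba _) (pow_nonneg ha0 _)
            _ = a ^ (i + (n - 1 - i)) := (pow_add a i _).symm
            _ ≤ a ^ (n - 1) := by
                apply pow_le_pow_of_le_one ha0 ha
                omega
      _ = n * a ^ (n - 1) := by rw [Finset.sum_const, Finset.card_range, nsmul_eq_mul]
  exact mul_le_mul_of_nonneg_right this (by linarith)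

lemma aux_sq_le_four_exp {x : ℝ} (hx : 0 ≤ x) : x ^ 2 ≤ 4 * Real.exp x := by
  have h := Real.add_one_le_exp (x / 2)
  have h2 : Real.exp x = Real.exp (x / 2) * Real.exp (x / 2) := by
    rw [← Real.exp_add]; ring_nf
  nlinarith [Real.exp_pos (x / 2)]

theorem scalar_chernoff_estimate :
    ∃ M : ℝ, 0 < M ∧ ∀ n : ℕ, 1 ≤ n → ∀ l ∈ Set.Icc (0 : ℝ) 1,
      |l ^ n - Real.exp ((n : ℝ) * (l - 1))| ≤ M / n := by
  refine ⟨16, by norm_num, fun n hn l hl => ?_⟩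
  obtain ⟨hl0, hl1⟩ := hl
  have hx : l - 1 ≤ 0 := by linarith
  have hle : l ≤ Real.exp (l - 1) := by
    have := Real.add_one_le_exp (l - 1); linarith
  have hexp1 : Real.exp (l - 1) ≤ 1 := Real.exp_le_one_iff.mpr hx
  have hnn : (0 : ℝ) < n := by exact_mod_cast hn
  have hexppow : Real.exp ((n : ℝ) * (l - 1)) = Real.exp (l - 1) ^ n := by
    rw [← Real.exp_nat_mul]
  have hpow : l ^ n ≤ Real.exp ((n : ℝ) * (l - 1)) := by
    rw [hexppow]; exact pow_le_pow_left₀ hl0 hle n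
  rw [abs_sub_comm, abs_of_nonneg (by linarith)]
  -- key chain
  have hkey : Real.exp ((n : ℝ) * (l - 1)) - l ^ n
      ≤ n * Real.exp (l - 1) ^ (n - 1) * (Real.exp (l - 1) - l) := by
    rw [hexppow]
    exact aux_pow_sub_pow_le hl0 hle hexp1 n
  have hd : Real.exp (l - 1) - l ≤ (1 - l) ^ 2 := by
    have h := Real.abs_exp_sub_one_sub_id_le (x := l - 1) (by rw [abs_of_nonpos hx]; linarith)
    have := abs_le.mp h
    nlinarith [this.1, this.2]
  have hexpm : Real.exp (l - 1) ^ (n - 1) = Real.exp (-((n : ℝ) - 1) * (1 - l)) := by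
    rw [← Real.exp_nat_mul]
    congr 1
    have : ((n - 1 : ℕ) : ℝ) = (n : ℝ) - 1 := by
      have : 1 ≤ n := hn
      push_cast [Nat.cast_sub this]; ring
    rw [this]; ring
  set t := 1 - l with ht
  clear_value t
  have ht0 : 0 ≤ t := by linarith
  have ht1 : t ≤ 1 := by linarith
  have hstep : (n : ℝ) * Real.exp (l - 1) ^ (n - 1) * (Real.exp (l - 1) - l)
      ≤ (n : ℝ) * Real.exp (-((n : ℝ) - 1) * t) * t ^ 2 := by
    rw [hexpm]
    have hEnn : (0 : ℝ) ≤ (n : ℝ) * Real.exp (-((n : ℝ) - 1) * t) :=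
      mul_nonneg hnn.le (Real.exp_pos _).le
    have := mul_le_mul_of_nonneg_left hd hEnn
    linarith [this]
  -- final: n * exp(-(n-1)t) * t^2 ≤ 16 / n
  have hfinal : (n : ℝ) * Real.exp (-((n : ℝ) - 1) * t) * t ^ 2 ≤ 16 / n := by
    have hEpos := Real.exp_pos (((n : ℝ) - 1) * t)
    have hE : Real.exp (-((n : ℝ) - 1) * t) = (Real.exp (((n : ℝ) - 1) * t))⁻¹ := by
      rw [← Real.exp_neg]; ring_nf
    have hkey2 : (n : ℝ) ^ 2 * t ^ 2 ≤ 16 * Real.exp (((n : ℝ) - 1) * t) := by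
      rcases eq_or_lt_of_le hn with h1 | h2
      · have : (n : ℝ) = 1 := by exact_mod_cast h1.symm
        rw [this]
        simp only [sub_self, zero_mul, Real.exp_zero, one_pow, one_mul]
        nlinarith
      · have hn2 : (2 : ℝ) ≤ (n : ℝ) := by exact_mod_cast h2
        have haux := aux_sq_le_four_exp (x := ((n : ℝ) - 1) * t)
          (mul_nonneg (by linarith) ht0)
        nlinarith [sq_nonneg t, sq_nonneg ((n : ℝ) - 2), mul_nonneg (mul_nonneg (sq_nonneg ((n:ℝ)-2)) ht0) ht0]
    calc (n : ℝ) * Real.exp (-((n : ℝ) - 1) * t) * t ^ 2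
        = (n : ℝ) * t ^ 2 / Real.exp (((n : ℝ) - 1) * t) := by rw [hE]; ring
      _ ≤ 16 / (n : ℝ) := by
          rw [div_le_div_iff₀ hEpos hnn]
          nlinarith
  linarith [hkey, hstep, hfinal]
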